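/- Let A be a unital C*-algebra and x an element of its closed unit ball. Suppose that whenever x = t₁* a₁ t₁ + t₂* a₂ t₂ with a₁, a₂ in the unit ball and t₁, t₂ invertible elements satisfying t₁*t₁ + t₂*t₂ = 1, each aᵢ is unitarily equivalent to x. Then x is a C*-extreme point: for every k, whenever x = ∑_{i=1}^k tᵢ* aᵢ tᵢ with all aᵢ in the unit ball and tᵢ invertible with ∑ tᵢ*tᵢ = 1, each aᵢ is unitarily equivalent to x. -/

import Mathlib

lemma cs_bound {A : Type*} [CStarAlgebra A] {k : ℕ} (a r : Fin k → A)
    (ha : ∀ i, ‖a i‖ ≤ 1) (hr : ∑ i, star (r i) * r i = 1) :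
    ‖∑ i, star (r i) * a i * r i‖ ≤ 1 := by
  letI := CStarAlgebra.spectralOrder A
  haveI := CStarAlgebra.spectralOrderedRing A
  set c := ∑ i, star (r i) * a i * r i with hc
  have hcstar : ∑ i, star (r i) * star (a i) * r i = star c := by
    rw [hc, star_sum]
    exact Finset.sum_congr rfl fun i _ => by simp [star_mul, mul_assoc]
  have key : ∑ i, star (a i * r i - r i * c) * (a i * r i - r i * c)
      = (∑ i, star (r i) * (star (a i) * a i) * r i) - star c * c := by
    have e : ∀ i, star (a i * r i - r i * c) * (a i * r i - r i * c)
        = star (r i) * (star (a i) * a i) * r i - (star (r i) * star (a i) * r i) * c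
          - star c * (star (r i) * a i * r i) + star c * ((star (r i) * r i) * c) := by
      intro i; simp only [star_sub, star_mul]; noncomm_ring
    rw [Finset.sum_congr rfl fun i _ => e i, Finset.sum_add_distrib,
      Finset.sum_sub_distrib, Finset.sum_sub_distrib, ← Finset.sum_mul, ← Finset.mul_sum,
      ← Finset.mul_sum, ← Finset.sum_mul, hcstar, ← hc, hr]
    noncomm_ring
  have hpos : 0 ≤ (∑ i, star (r i) * (star (a i) * a i) * r i) - star c * c := by
    rw [← key]
    exact Finset.sum_nonneg fun i _ => star_mul_self_nonneg _
  have h1 : star c * c ≤ ∑ i, star (r i) * (star (a i) * a i) * r i := sub_nonneg.mp hpos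
  have h2 : ∀ i, star (a i) * a i ≤ 1 := by
    intro i
    calc star (a i) * a i ≤ algebraMap ℝ A ‖star (a i) * a i‖ :=
          IsSelfAdjoint.le_algebraMap_norm_self (IsSelfAdjoint.star_mul_self _)
      _ ≤ 1 := by
          rw [Algebra.algebraMap_eq_smul_one]
          have hn : ‖star (a i) * a i‖ ≤ 1 := by
            rw [CStarRing.norm_star_mul_self]
            nlinarith [ha i, norm_nonneg (a i)]
          have h01 : (0:A) ≤ 1 := zero_le_one
          have hs := smul_nonneg (sub_nonneg.mpr hn) h01
          rw [sub_smul, one_smul] at hs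
          exact sub_nonneg.mp hs
  have h3 : star c * c ≤ 1 := by
    calc star c * c ≤ ∑ i, star (r i) * (star (a i) * a i) * r i := h1
      _ ≤ ∑ i, star (r i) * 1 * r i :=
          Finset.sum_le_sum fun i _ => star_left_conjugate_le_conjugate (h2 i) _
      _ = 1 := by simpa using hr
  have h4 : ‖star c * c‖ ≤ ‖(1 : A)‖ :=
    CStarAlgebra.norm_le_norm_of_nonneg_of_le (star_mul_self_nonneg c) h3
  have hone : ‖(1:A)‖ * ‖(1:A)‖ = ‖(1:A)‖ := by
    simpa using (CStarRing.norm_star_mul_self (x := (1:A))).symm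
  have hle : ‖(1:A)‖ ≤ 1 := by nlinarith [norm_nonneg (1:A)]
  rw [CStarRing.norm_star_mul_self] at h4
  nlinarith [norm_nonneg c]

/-- If every proper C*-convex decomposition of `x` into two summands has both
components unitarily equivalent to `x`, then `x` is a C*-extreme point of the
closed unit ball: the same holds for decompositions with any number of summands. -/
theorem cstarExtreme_of_two_sums {A : Type*} [NormedRing A] [StarRing A]
    [CStarRing A] [NormedAlgebra ℂ A] [CompleteSpace A] [StarModule ℂ A]
    (x : A) (hx : ‖x‖ ≤ 1)
    (h2 : ∀ a₁ a₂ t₁ t₂ : A, ‖a₁‖ ≤ 1 → ‖a₂‖ ≤ 1 → IsUnit t₁ → IsUnit t₂ →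
      star t₁ * t₁ + star t₂ * t₂ = 1 →
      x = star t₁ * a₁ * t₁ + star t₂ * a₂ * t₂ →
      (∃ u : A, star u * u = 1 ∧ u * star u = 1 ∧ a₁ = star u * x * u) ∧
      (∃ u : A, star u * u = 1 ∧ u * star u = 1 ∧ a₂ = star u * x * u)) :
    ∀ (k : ℕ) (a t : Fin k → A), (∀ i, ‖a i‖ ≤ 1) → (∀ i, IsUnit (t i)) →
      (∑ i, star (t i) * t i) = 1 → x = ∑ i, star (t i) * a i * t i →
      ∀ i, ∃ u : A, star u * u = 1 ∧ u * star u = 1 ∧ a i = star u * x * u := by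
  letI : CStarAlgebra A := { }
  letI := CStarAlgebra.spectralOrder A
  haveI := CStarAlgebra.spectralOrderedRing A
  intro k
  induction k with
  | zero => intro a t _ _ _ _ i; exact i.elim0
  | succ n ih =>
    intro a t ha ht hsum hx i
    cases n with
    | zero =>
      have hsum1 : star (t 0) * t 0 = 1 := by simpa using hsum
      have hx1 : x = star (t 0) * a 0 * t 0 := by simpa using hx
      obtain ⟨v, hv⟩ := ht 0
      have hts : t 0 * star (t 0) = 1 := by
        have h0 : t 0 * (↑v⁻¹ : A) = 1 := by rw [← hv]; exact v.mul_inv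
        calc t 0 * star (t 0)
            = t 0 * star (t 0) * (t 0 * (↑v⁻¹ : A)) := by rw [h0, mul_one]
          _ = t 0 * (star (t 0) * t 0) * (↑v⁻¹ : A) := by noncomm_ring
          _ = 1 := by rw [hsum1, mul_one, h0]
      have hi : i = 0 := Fin.eq_zero i
      refine ⟨star (t 0), by simpa using hts, by simpa using hsum1, ?_⟩
      rw [hi, star_star, hx1]
      calc a 0 = (t 0 * star (t 0)) * a 0 * (t 0 * star (t 0)) := by rw [hts]; simp
        _ = t 0 * (star (t 0) * a 0 * t 0) * star (t 0) := by noncomm_ring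
    | succ m =>
      set t' : Fin (m + 1) → A := fun j => t j.succ with ht'
      set a' : Fin (m + 1) → A := fun j => a j.succ with ha'
      set p : A := ∑ j, star (t' j) * t' j with hp
      have hsum' : star (t 0) * t 0 + p = 1 := by
        rw [hp]; rw [Fin.sum_univ_succ] at hsum; exact hsum
      have hx' : x = star (t 0) * a 0 * t 0 + ∑ j, star (t' j) * a' j * t' j := by
        rw [Fin.sum_univ_succ] at hx; exact hx
      have hp0 : 0 ≤ p := Finset.sum_nonneg fun j _ => star_mul_self_nonneg _
      have h00 : star (t' 0) * t' 0 ≤ p :=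
        Finset.single_le_sum (f := fun j => star (t' j) * t' j)
          (fun j _ => star_mul_self_nonneg _) (Finset.mem_univ 0)
      have hu0 : IsUnit (star (t' 0) * t' 0) := ((ht _).star).mul (ht _)
      have hpu : IsUnit p := CStarAlgebra.isUnit_of_le _ h00 ⟨star_mul_self_nonneg _, hu0⟩
      set s := CFC.sqrt p with hsdef
      have hs0 : 0 ≤ s := CFC.sqrt_nonneg p
      have hss : s * s = p := CFC.sqrt_mul_sqrt_self p hp0
      have hssa : IsSelfAdjoint s := IsSelfAdjoint.of_nonneg hs0
      obtain ⟨q, hq⟩ := hpu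
      set si : A := s * (↑q⁻¹ : A) with hsidef
      have hsi1 : s * si = 1 := by
        rw [hsidef, ← mul_assoc, hss, ← hq]; exact q.mul_inv
      have hqs : ((↑q⁻¹ : A) * s) * s = 1 := by
        rw [mul_assoc, hss, ← hq]; exact q.inv_mul
      have hbe : (↑q⁻¹ : A) * s = si := by
        calc (↑q⁻¹ : A) * s = ((↑q⁻¹ : A) * s) * (s * si) := by
              rw [hsi1, mul_one]
          _ = (((↑q⁻¹ : A) * s) * s) * si := by noncomm_ring
          _ = si := by rw [hqs, one_mul]
      have hsi2 : si * s = 1 := by rw [← hbe]; exact hqs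
      have hsu : IsUnit s := isUnit_iff_exists.mpr ⟨si, hsi1, hsi2⟩
      have hsiu : IsUnit si := isUnit_iff_exists.mpr ⟨s, hsi2, hsi1⟩
      have hsistar : star si = si := by
        have h1 : star si * s = 1 := by
          have := congrArg star hsi1
          rwa [star_mul, hssa.star_eq, star_one] at this
        calc star si = star si * (s * si) := by rw [hsi1, mul_one]
          _ = (star si * s) * si := by noncomm_ring
          _ = si := by rw [h1, one_mul]
      set r : Fin (m + 1) → A := fun j => t' j * si with hrdef
      have e1 : ∀ y : A, s * (si * y) = y := fun y => by rw [← mul_assoc, hsi1, one_mul]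
      have e2 : ∀ y : A, si * (s * y) = y := fun y => by rw [← mul_assoc, hsi2, one_mul]
      have hrs : ∑ j, star (r j) * r j = 1 := by
        have e : ∀ j, star (r j) * r j = si * ((star (t' j) * t' j) * si) := by
          intro j; rw [hrdef]; simp only [star_mul, hsistar]; noncomm_ring
        rw [Finset.sum_congr rfl fun j _ => e j, ← Finset.mul_sum, ← Finset.sum_mul, ← hp,
          ← hss]
        calc si * ((s * s) * si) = si * (s * (s * si)) := by noncomm_ring
          _ = 1 := by rw [hsi1, mul_one, hsi2]
      set b : A := ∑ j, star (r j) * a' j * r j with hb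
      have hbn : ‖b‖ ≤ 1 := cs_bound a' r (fun j => ha _) hrs
      have hsbs : star s * b * s = ∑ j, star (t' j) * a' j * t' j := by
        rw [hssa.star_eq, hb, Finset.mul_sum, Finset.sum_mul]
        refine Finset.sum_congr rfl fun j _ => ?_
        rw [hrdef]
        simp only [star_mul, hsistar]
        calc s * (si * star (t' j) * a' j * (t' j * si)) * s
            = s * (si * (star (t' j) * a' j * (t' j * (si * s)))) := by noncomm_ring
          _ = star (t' j) * a' j * t' j := by rw [hsi2, mul_one, e1]
      have hx2 : x = star (t 0) * a 0 * t 0 + star s * b * s := by rw [hsbs]; exact hx'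
      have hcoef : star (t 0) * t 0 + star s * s = 1 := by
        rw [hssa.star_eq, hss]; exact hsum'
      obtain ⟨h0c, v, hv1, hv2, hvb⟩ :=
        h2 (a 0) b (t 0) s (ha 0) hbn (ht 0) hsu hcoef hx2
      refine Fin.cases ?_ ?_ i
      · exact h0c
      · intro j
        have hvu : IsUnit v := isUnit_iff_exists.mpr ⟨star v, hv2, hv1⟩
        have hxv : x = v * b * star v := by
          rw [hvb]
          calc x = (v * star v) * x * (v * star v) := by rw [hv2]; simp
            _ = v * (star v * x * v) * star v := by noncomm_ring
        set r2 : Fin (m + 1) → A := fun j => r j * star v with hr2def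
        have hr2u : ∀ j, IsUnit (r2 j) := fun j => (((ht _).mul hsiu).mul hvu.star)
        have hr2sum : ∑ j, star (r2 j) * r2 j = 1 := by
          have e : ∀ j, star (r2 j) * r2 j = v * (star (r j) * r j) * star v := by
            intro j; rw [hr2def]; simp only [star_mul, star_star]; noncomm_ring
          rw [Finset.sum_congr rfl fun j _ => e j, ← Finset.sum_mul, ← Finset.mul_sum, hrs,
            mul_one, hv2]
        have hx3 : x = ∑ j, star (r2 j) * a' j * r2 j := by
          rw [hxv, hb, Finset.mul_sum, Finset.sum_mul]
          refine Finset.sum_congr rfl fun j _ => ?_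
          rw [hr2def]; simp only [star_mul, star_star]; noncomm_ring
        obtain ⟨u, hu1, hu2, hu3⟩ := ih a' r2 (fun j => ha _) hr2u hr2sum hx3 j
        exact ⟨u, hu1, hu2, by simpa [ha'] using hu3⟩
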